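/- With notation as before, if the endpoints b_1,...,b_k are pairwise distinct, then for each i, rank(M_i, G_i, M_{i+1}) = rank(M_{i+1}) + [i ∈ {b_1,...,b_k}]. -/

import Mathlib

/-- Membership in the half-open circular interval `(a, b]` on `ZMod n`, with `(a,a] = ∅`. -/
def circMem (n : ℕ) [NeZero n] (a b j : ZMod n) : Prop :=
  j ≠ a ∧ (j - a).val ≤ (b - a).val

instance (n : ℕ) [NeZero n] (a b j : ZMod n) : Decidable (circMem n a b j) :=
  inferInstanceAs (Decidable (_ ∧ _))

/-- `(a, b]` is a span of `g`. -/
def IsSpan {F : Type*} [Field F] {n : ℕ} [NeZero n] (g : ZMod n → F) (a b : ZMod n) : Prop :=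
  g a ≠ 0 ∧ g b ≠ 0 ∧ ∀ j : ZMod n, ¬ (j = a ∨ circMem n a b j) → g j = 0

open Submodule Module Matrix

section helpers
variable {F : Type*} [Field F] {k : ℕ}

lemma sum_single_eq (v : Fin k → F) : ∑ l, (Pi.single l (v l) : Fin k → F) = v := by
  ext j
  simp [Finset.sum_apply, Pi.single_apply]

lemma li_singles (p : Fin k → Prop) :
    LinearIndependent F (fun l : {l // p l} => (Pi.single (l : Fin k) (1 : F) : Fin k → F)) := by
  classical
  have h := (Pi.basisFun F (Fin k)).linearIndependent.comp
    (fun l : {l // p l} => (l : Fin k)) Subtype.val_injective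
  convert h using 1
  funext l
  simp [Function.comp]

lemma mem_span_singles {p : Fin k → Prop} (v : Fin k → F) (hv : ∀ l, v l ≠ 0 → p l) :
    v ∈ span F (Set.range fun l : {l // p l} => (Pi.single (l : Fin k) (1 : F) : Fin k → F)) := by
  classical
  rw [← sum_single_eq v]
  refine Submodule.sum_mem _ fun l _ => ?_
  by_cases h : v l = 0
  · simp [h]
  · have he : (Pi.single l (v l) : Fin k → F) = v l • (Pi.single l (1 : F) : Fin k → F) := by
      ext j; simp [Pi.single_apply]
    rw [he]
    exact Submodule.smul_mem _ _ (subset_span ⟨⟨l, hv l h⟩, rfl⟩)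
end helpers

section zmod
variable {n : ℕ} [NeZero n]

lemma one_lt_of_ne {a b : ZMod n} (h : a ≠ b) : 1 < n := by
  rcases Nat.lt_or_ge 1 n with h1 | h1
  · exact h1
  · have hn := NeZero.pos n
    interval_cases n
    haveI : Subsingleton (ZMod 1) := inferInstanceAs (Subsingleton (Fin 1))
    exact absurd (Subsingleton.elim a b) h

lemma circMem_succ {a b i : ZMod n} (h : circMem n a b i) (hne : i ≠ b) :
    circMem n a b (i + 1) := by
  obtain ⟨h1, h2⟩ := h
  have hxy : i - a ≠ b - a := fun he => hne (sub_left_inj.mp he)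
  have hlt : (i - a).val < (b - a).val :=
    lt_of_le_of_ne h2 (fun he => hxy (ZMod.val_injective n he))
  have hbn : (b - a).val < n := ZMod.val_lt _
  haveI : Fact (1 < n) := ⟨by omega⟩
  have hval : (i + 1 - a).val = (i - a).val + 1 := by
    have he : i + 1 - a = (i - a) + 1 := by ring
    rw [he, ZMod.val_add_of_lt (by rw [ZMod.val_one]; omega), ZMod.val_one]
  refine ⟨fun he => ?_, by omega⟩
  have h0 : i + 1 - a = 0 := by rw [he]; ring
  rw [h0, ZMod.val_zero] at hval
  omega

lemma not_circMem_succ {a i : ZMod n} : ¬ circMem n a i (i + 1) := by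
  rintro ⟨h1, h2⟩
  have hn : 1 < n := one_lt_of_ne h1
  haveI : Fact (1 < n) := ⟨hn⟩
  have he : i + 1 - a = (i - a) + 1 := by ring
  have hv : (i + 1 - a).val = ((i - a).val + 1) % n := by
    rw [he, ZMod.val_add, ZMod.val_one]
  have hlt : (i - a).val < n := ZMod.val_lt _
  rcases Nat.lt_or_ge ((i - a).val + 1) n with hc | hc
  · rw [Nat.mod_eq_of_lt hc] at hv; omega
  · have heq : (i - a).val + 1 = n := by omega
    rw [heq, Nat.mod_self] at hv
    have : i + 1 - a = 0 := (ZMod.val_eq_zero _).mp hv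
    exact h1 (by linear_combination this)

lemma circMem_succ_start {a b : ZMod n} (hab : a ≠ b) : circMem n a b (a + 1) := by
  haveI : Fact (1 < n) := ⟨one_lt_of_ne hab⟩
  constructor
  · intro he
    have : (1 : ZMod n) = 0 := by linear_combination he
    simp at this
  · have h1 : a + 1 - a = 1 := by ring
    rw [h1, ZMod.val_one]
    have hne : b - a ≠ 0 := sub_ne_zero.mpr (Ne.symm hab)
    have := (ZMod.val_eq_zero (b - a)).not.mpr hne
    omega
end zmod

/-- If the endpoints `b_1, …, b_k` are pairwise distinct, then
`rank (M_i | G_i | M_{i+1}) = rank M_{i+1} + [i ∈ {b_1,…,b_k}]`. -/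
theorem rank_concat_eq_rank_add_indicator_end {F : Type*} [Field F] {n k : ℕ} [NeZero n]
    (G : Matrix (Fin k) (ZMod n) F) (a b : Fin k → ZMod n)
    (hspan : ∀ l, IsSpan (G l) (a l) (b l))
    (hb : Function.Injective b)
    (M : ZMod n → Matrix (Fin k) (Fin k) F)
    (hM : ∀ i, M i = Matrix.diagonal fun l => if circMem n (a l) (b l) i then (1 : F) else 0)
    (i : ZMod n) :
    (Matrix.of fun l (j : Fin k ⊕ Unit ⊕ Fin k) =>
        Sum.elim (fun j' => M i l j')
          (Sum.elim (fun _ => G l i) fun j' => M (i + 1) l j') j).rank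
      = (M (i + 1)).rank + (if ∃ l, b l = i then 1 else 0) := by
  classical
  set q : Fin k → Prop := fun l => circMem n (a l) (b l) (i + 1) with hq
  set B : Matrix (Fin k) (Fin k ⊕ Unit ⊕ Fin k) F :=
    Matrix.of fun l (j : Fin k ⊕ Unit ⊕ Fin k) =>
      Sum.elim (fun j' => M i l j')
        (Sum.elim (fun _ => G l i) fun j' => M (i + 1) l j') j with hBdef
  -- rank of M (i+1)
  have hrank1 : (M (i + 1)).rank = Fintype.card {l // q l} := by
    rw [hM, Matrix.rank_diagonal]
    exact Fintype.card_congr (Equiv.subtypeEquivRight fun l => by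
      by_cases h : circMem n (a l) (b l) (i + 1) <;> simp [h, hq])
  -- support of the middle column
  have hsupp : ∀ l, G l i ≠ 0 → q l ∨ b l = i := by
    intro l hGl
    by_cases hbi : b l = i
    · exact Or.inr hbi
    · left
      have hz := (hspan l).2.2 i
      have hi : i = a l ∨ circMem n (a l) (b l) i := by
        by_contra hc
        push_neg at hc
        exact hGl (hz (by tauto))
      rcases hi with hi | hi
      · have hab : a l ≠ b l := fun he => hbi (by rw [← he, ← hi])
        rw [hq]
        rw [hi]
        exact circMem_succ_start hab
      · exact circMem_succ hi (fun h => hbi h.symm)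
  -- columns of M i'
  have hMcol : ∀ (i' : ZMod n) (l j : Fin k), M i' l j ≠ 0 →
      l = j ∧ circMem n (a l) (b l) i' := by
    intro i' l j h
    rw [hM, Matrix.diagonal_apply] at h
    by_cases hlj : l = j
    · subst hlj
      refine ⟨rfl, ?_⟩
      by_cases hc : circMem n (a l) (b l) i'
      · exact hc
      · simp [hc] at h
    · simp [hlj] at h
  -- single l 1 for q l is a column of B
  have hsingleq : ∀ l, q l →
      (Pi.single l (1 : F) : Fin k → F) ∈ span F (Set.range Bᵀ) := by
    intro l hql
    refine subset_span ⟨Sum.inr (Sum.inr l), ?_⟩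
    funext l'
    by_cases h : l' = l
    · subst h
      have hc : circMem n (a l') (b l') (i + 1) := hql
      simp [hBdef, hM, Matrix.diagonal_apply, Pi.single_apply, hc]
    · simp [hBdef, hM, Matrix.diagonal_apply, Pi.single_apply, h]
  by_cases hex : ∃ l, b l = i
  · obtain ⟨l₀, hl₀⟩ := hex
    set p : Fin k → Prop := fun l => q l ∨ l = l₀ with hp
    have hql₀ : ¬ q l₀ := by
      intro h
      have h' : circMem n (a l₀) (b l₀) (i + 1) := h
      rw [hl₀] at h'
      exact not_circMem_succ h'
    have hspan_eq : span F (Set.range Bᵀ)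
        = span F (Set.range fun l : {l // p l} => (Pi.single (l : Fin k) (1 : F) : Fin k → F)) := by
      apply le_antisymm
      · rw [span_le]
        rintro _ ⟨j, rfl⟩
        rcases j with j | j | j
        · refine mem_span_singles _ fun l hl => ?_
          have h := hMcol i l j hl
          rcases h with ⟨rfl, hc⟩
          by_cases hbl : b l = i
          · exact Or.inr (hb (hbl.trans hl₀.symm))
          · exact Or.inl (circMem_succ hc (fun h => hbl h.symm))
        · refine mem_span_singles _ fun l hl => ?_
          have h := hsupp l hl
          rcases h with h | h
          · exact Or.inl h
          · exact Or.inr (hb (h.trans hl₀.symm))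
        · refine mem_span_singles _ fun l hl => ?_
          exact Or.inl (hMcol (i + 1) l j hl).2
      · rw [span_le]
        rintro _ ⟨⟨l, hl⟩, rfl⟩
        rcases hl with hql | rfl
        · exact hsingleq l hql
        · -- the single at l₀
          have hg0 : G l (b l) ≠ 0 := (hspan l).2.1
          rw [hl₀] at hg0
          have hgcol : (fun l' => G l' i) ∈ span F (Set.range Bᵀ) :=
            subset_span ⟨Sum.inr (Sum.inl ()), by funext l'; simp [hBdef]⟩
          have hterm : ∀ l' ∈ Finset.univ.erase l,
              (Pi.single l' (G l' i) : Fin k → F) ∈ span F (Set.range Bᵀ) := by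
            intro l' hl'
            have hne : l' ≠ l := (Finset.mem_erase.mp hl').1
            by_cases hz : G l' i = 0
            · simp [hz]
            · have hql' : q l' := by
                rcases hsupp l' hz with h | h
                · exact h
                · exact absurd (hb (h.trans hl₀.symm)) hne
              have he : (Pi.single l' (G l' i) : Fin k → F)
                  = G l' i • (Pi.single l' (1 : F) : Fin k → F) := by
                ext j; simp [Pi.single_apply]
              rw [he]
              exact smul_mem _ _ (hsingleq l' hql')
          have hkey : (Pi.single l (G l i) : Fin k → F) ∈ span F (Set.range Bᵀ) := by
            have hdec : (Pi.single l (G l i) : Fin k → F)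
                = (fun l' => G l' i) - ∑ l' ∈ Finset.univ.erase l,
                    (Pi.single l' (G l' i) : Fin k → F) := by
              rw [eq_sub_iff_add_eq, Finset.add_sum_erase _ (fun l' => (Pi.single l' (G l' i) : Fin k → F)) (Finset.mem_univ l),
                sum_single_eq]
            rw [hdec]
            exact sub_mem hgcol (Submodule.sum_mem _ hterm)
          have he : (Pi.single l (1 : F) : Fin k → F)
              = (G l i)⁻¹ • (Pi.single l (G l i) : Fin k → F) := by
            ext j
            by_cases h : j = l
            · subst h; simp [inv_mul_cancel₀ hg0]
            · simp [Pi.single_apply, h]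
          show (Pi.single l (1 : F) : Fin k → F) ∈ (span F (Set.range Bᵀ) : Set (Fin k → F))
          rw [he]
          exact smul_mem _ _ hkey
    have hcard : Fintype.card {l // p l} = Fintype.card {l // q l} + 1 := by
      rw [Fintype.card_subtype, Fintype.card_subtype]
      have hfe : Finset.univ.filter p = Finset.univ.filter q ∪ {l₀} := by
        ext l
        simp only [Finset.mem_filter, Finset.mem_union, Finset.mem_singleton,
          Finset.mem_univ, true_and, hp]
      rw [hfe, Finset.card_union_of_disjoint (by simp [hql₀]), Finset.card_singleton]
    have e1 : B.rank = Fintype.card {l // p l} := by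
      rw [Matrix.rank_eq_finrank_span_cols]
      show finrank F (span F (Set.range Bᵀ)) = _
      rw [hspan_eq]
      exact finrank_span_eq_card (li_singles p)
    rw [e1, hcard, hrank1, if_pos (⟨l₀, hl₀⟩ : ∃ l, b l = i)]
  · have hspan_eq : span F (Set.range Bᵀ)
        = span F (Set.range fun l : {l // q l} => (Pi.single (l : Fin k) (1 : F) : Fin k → F)) := by
      apply le_antisymm
      · rw [span_le]
        rintro _ ⟨j, rfl⟩
        rcases j with j | j | j
        · refine mem_span_singles _ fun l hl => ?_
          rcases hMcol i l j hl with ⟨rfl, hc⟩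
          exact circMem_succ hc (fun h => hex ⟨l, h.symm⟩)
        · refine mem_span_singles _ fun l hl => ?_
          rcases hsupp l hl with h | h
          · exact h
          · exact absurd ⟨l, h⟩ hex
        · refine mem_span_singles _ fun l hl => ?_
          exact (hMcol (i + 1) l j hl).2
      · rw [span_le]
        rintro _ ⟨⟨l, hl⟩, rfl⟩
        exact hsingleq l hl
    have e1 : B.rank = Fintype.card {l // q l} := by
      rw [Matrix.rank_eq_finrank_span_cols]
      show finrank F (span F (Set.range Bᵀ)) = _
      rw [hspan_eq]
      exact finrank_span_eq_card (li_singles q)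
    rw [e1, hrank1, if_neg hex, Nat.add_zero]
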